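/- Let x₁,…,xₙ and y₁,…,yₙ be points in ℝ^d and ε ∈ [0,1] with (1/n)·#{j : y_j ≠ x_j} ≤ ε. If ẑ ∈ ℝ^d satisfies D_n(ẑ; y₁,…,yₙ) = sup_{w ∈ ℝ^d} D_n(w; y₁,…,yₙ), then D_n(ẑ; x₁,…,xₙ) ≥ sup_{w ∈ ℝ^d} D_n(w; x₁,…,xₙ) − 2ε; that is, every maximizer of the contaminated empirical depth lies in the depth region R_n(2ε; x₁,…,xₙ) of the original sample. -/

import Mathlib

open MeasureTheory ProbabilityTheory Real Filter
open scoped ENNReal RealInnerProductSpace symmDiff Pointwise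

noncomputable section

/-- Euclidean space ℝ^d. -/
abbrev Euc (d : ℕ) := EuclideanSpace ℝ (Fin d)

/-- Apply a d×d matrix to a vector of ℝ^d. -/
noncomputable def mulVecE {d : ℕ} (M : Matrix (Fin d) (Fin d) ℝ) (v : Euc d) : Euc d :=
  (EuclideanSpace.equiv (Fin d) ℝ).symm (M.mulVec ((EuclideanSpace.equiv (Fin d) ℝ) v))

/-- Empirical (Tukey) halfspace depth of `z` with respect to the sample `x`:
the infimum over unit vectors `u` of the fraction of sample points in the
halfspace `{w : ⟪w, u⟫ ≥ ⟪z, u⟫}`. -/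
noncomputable def empDepth {d n : ℕ} (x : Fin n → Euc d) (z : Euc d) : ℝ :=
  ⨅ u : {u : Euc d // ‖u‖ = 1},
    ((Finset.univ.filter (fun j => ⟪z, (u : Euc d)⟫ ≤ ⟪x j, (u : Euc d)⟫)).card : ℝ) / n

/-- Maximal empirical depth `sup_z D_n(z; x)`. -/
noncomputable def maxDepth {d n : ℕ} (x : Fin n → Euc d) : ℝ :=
  ⨆ z : Euc d, empDepth x z

/-- Empirical depth region at level δ: `{z : D_n(z) ≥ sup_w D_n(w) − δ}`. -/
def depthRegion {d n : ℕ} (x : Fin n → Euc d) (δ : ℝ) : Set (Euc d) :=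
  {z | maxDepth x - δ ≤ empDepth x z}

/-- Standard Gaussian measure N(0, I_d) on ℝ^d. -/
noncomputable def stdGaussian (d : ℕ) : Measure (Euc d) :=
  (Measure.pi (fun _ : Fin d => gaussianReal 0 1)).map
    (EuclideanSpace.equiv (Fin d) ℝ).symm

/-- Gaussian measure N(μ, Σ) on ℝ^d, defined as the pushforward of the standard
Gaussian under `x ↦ μ + Σ^{1/2} x`. -/
noncomputable def gaussianE {d : ℕ} (μ : Euc d) (S : Matrix (Fin d) (Fin d) ℝ)
    (hS : S.PosSemidef) : Measure (Euc d) :=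
  (stdGaussian d).map (fun x => μ + mulVecE ((hS.1.eigenvectorUnitary : Matrix (Fin d) (Fin d) ℝ) *
      Matrix.diagonal (Real.sqrt ∘ hS.1.eigenvalues) *
      (star hS.1.eigenvectorUnitary : Matrix (Fin d) (Fin d) ℝ)) x)

/-- Operator (spectral) norm of a d×d matrix. -/
noncomputable def matOpNorm {d : ℕ} (S : Matrix (Fin d) (Fin d) ℝ) : ℝ :=
  ‖(Matrix.toEuclideanCLM (𝕜 := ℝ) S : Euc d →L[ℝ] Euc d)‖

/-- An estimator is affine equivariant if `T(Mx₁+b,…,Mxₙ+b) = M T(x₁,…,xₙ) + b`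
for every invertible matrix `M` and vector `b`. -/
def AffineEquivariant {d n : ℕ} (T : (Fin n → Euc d) → Euc d) : Prop :=
  ∀ (M : Matrix (Fin d) (Fin d) ℝ), IsUnit M → ∀ (b : Euc d) (x : Fin n → Euc d),
    T (fun j => mulVecE M (x j) + b) = mulVecE M (T x) + b

namespace Stmt3Aux

attribute [local instance 10] Classical.propDecidable

lemma empDepth_nonneg {d n : ℕ} (x : Fin n → Euc d) (z : Euc d) : 0 ≤ empDepth x z := by
  unfold empDepth
  rcases isEmpty_or_nonempty {u : Euc d // ‖u‖ = 1} with h | h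
  · rw [Real.iInf_of_isEmpty]
  · exact le_ciInf fun u => by positivity

lemma bddBelow_aux {d n : ℕ} (x : Fin n → Euc d) (z : Euc d) :
    BddBelow (Set.range (fun u : {u : Euc d // ‖u‖ = 1} =>
      ((Finset.univ.filter (fun j => ⟪z, (u : Euc d)⟫ ≤ ⟪x j, (u : Euc d)⟫)).card : ℝ) / n)) := by
  refine ⟨0, ?_⟩
  rintro r ⟨u, rfl⟩
  positivity

lemma empDepth_le_one {d n : ℕ} (x : Fin n → Euc d) (z : Euc d) : empDepth x z ≤ 1 := by
  unfold empDepth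
  rcases isEmpty_or_nonempty {u : Euc d // ‖u‖ = 1} with h | h
  · rw [Real.iInf_of_isEmpty]; norm_num
  · obtain ⟨u⟩ := h
    refine (ciInf_le (bddBelow_aux x z) u).trans ?_
    rcases Nat.eq_zero_or_pos n with hn | hn
    · subst hn; simp
    · rw [div_le_one (by exact_mod_cast hn)]
      exact_mod_cast (Finset.card_filter_le _ _).trans_eq (by simp)

lemma empDepth_diff {d n : ℕ} (x y : Fin n → Euc d) (z : Euc d) :
    empDepth x z ≤ empDepth y z +
      ((Finset.univ.filter (fun j => y j ≠ x j)).card : ℝ) / n := by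
  set c : ℝ := ((Finset.univ.filter (fun j => y j ≠ x j)).card : ℝ) / n with hc
  have hc0 : 0 ≤ c := by positivity
  rcases isEmpty_or_nonempty {u : Euc d // ‖u‖ = 1} with h | h
  · unfold empDepth; rw [Real.iInf_of_isEmpty, Real.iInf_of_isEmpty]; linarith
  · have hpt : ∀ u : {u : Euc d // ‖u‖ = 1},
        ((Finset.univ.filter (fun j => ⟪z, (u : Euc d)⟫ ≤ ⟪x j, (u : Euc d)⟫)).card : ℝ) / n
        ≤ ((Finset.univ.filter (fun j => ⟪z, (u : Euc d)⟫ ≤ ⟪y j, (u : Euc d)⟫)).card : ℝ) / n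
          + c := by
      intro u
      have hsub : (Finset.univ.filter (fun j => ⟪z, (u : Euc d)⟫ ≤ ⟪x j, (u : Euc d)⟫))
          ⊆ (Finset.univ.filter (fun j => ⟪z, (u : Euc d)⟫ ≤ ⟪y j, (u : Euc d)⟫))
            ∪ (Finset.univ.filter (fun j => y j ≠ x j)) := by
        intro j hj
        simp only [Finset.mem_filter, Finset.mem_union, Finset.mem_univ, true_and] at *
        by_cases hxy : y j = x j
        · left; rw [hxy]; exact hj
        · right; exact hxy
      have hcard := (Finset.card_le_card hsub).trans (Finset.card_union_le _ _)
      rcases Nat.eq_zero_or_pos n with hn | hn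
      · subst hn; simp [hc]
      · rw [hc, ← add_div]
        have hnpos : (0:ℝ) < n := by exact_mod_cast hn
        rw [div_le_div_iff_of_pos_right hnpos]
        exact_mod_cast hcard
    have h1 : empDepth x z - c ≤ empDepth y z := by
      refine le_ciInf fun u => ?_
      have h2 := (ciInf_le (bddBelow_aux x z) u).trans (hpt u)
      unfold empDepth
      linarith [h2]
    linarith

lemma maxDepth_diff {d n : ℕ} (x y : Fin n → Euc d) :
    maxDepth x ≤ maxDepth y +
      ((Finset.univ.filter (fun j => y j ≠ x j)).card : ℝ) / n := by
  refine ciSup_le fun z => ?_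
  have h1 := empDepth_diff x y z
  have h2 : empDepth y z ≤ maxDepth y := by
    refine le_ciSup ⟨1, ?_⟩ z
    rintro r ⟨w, rfl⟩
    exact empDepth_le_one y w
  linarith

end Stmt3Aux

/-- every maximizer of the contaminated empirical depth lies in the
depth region `R_n(2ε)` of the original sample. -/
theorem stmt_3 {d n : ℕ} (x y : Fin n → Euc d) (ε : ℝ) (hε0 : 0 ≤ ε) (hε1 : ε ≤ 1)
    (hcont : (Nat.card {j : Fin n | y j ≠ x j} : ℝ) / n ≤ ε)
    (zhat : Euc d) (hzhat : empDepth y zhat = maxDepth y) :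
    maxDepth x - 2 * ε ≤ empDepth x zhat ∧ zhat ∈ depthRegion x (2 * ε) := by
  classical
  set c : ℝ := ((Finset.univ.filter (fun j => y j ≠ x j)).card : ℝ) / n with hc
  have hcard : (Nat.card {j : Fin n | y j ≠ x j} : ℝ)
      = ((Finset.univ.filter (fun j => y j ≠ x j)).card : ℝ) := by
    norm_cast
    simp [Nat.card_eq_fintype_card, Fintype.card_subtype]
  have hcε : c ≤ ε := by rw [hc, ← hcard]; exact hcont
  have hsymm : ((Finset.univ.filter (fun j => x j ≠ y j)).card : ℝ) / n = c := by
    have hEq : (Finset.univ.filter (fun j => x j ≠ y j))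
        = (Finset.univ.filter (fun j => y j ≠ x j)) :=
      Finset.filter_congr fun j _ => ne_comm
    rw [hc, hEq]
  have h1 : maxDepth x ≤ maxDepth y + c := Stmt3Aux.maxDepth_diff x y
  have h2 : empDepth y zhat ≤ empDepth x zhat + c := by
    have := Stmt3Aux.empDepth_diff y x zhat
    rwa [hsymm] at this
  have hmain : maxDepth x - 2 * ε ≤ empDepth x zhat := by linarith [hzhat]
  exact ⟨hmain, hmain⟩
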